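/- (Rising Edge Lemma) Let H be a mesh in which every axis size is a prime number, and let σ_0 →^{allGather(i)} σ_1 →^{p} σ_2 be a two-step sequence of collective operations between well-formed distributed types over H, where p is an allToAll or allPermute step. Then there exist r ≤ 2, labels q_1, …, q_r each of which is an allToAll or allPermute, with at most one of them an allToAll, a well-formed type σ_1′, and a dimension index j, such that σ_0 →^{q_1} ⋯ →^{q_r} σ_1′ →^{allGather(j)} σ_2. -/

import Mathlib

/-! ## Meshes, index tuples, distributed dimensions and types -/

structure Mesh where
  axes : Finset String
  size : String → ℕ
  size_pos : ∀ x ∈ axes, 1 ≤ size x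

def Mesh.hasAxis (H : Mesh) (x : String) (n : ℕ) : Prop :=
  x ∈ H.axes ∧ H.size x = n

abbrev IndexTuple (H : Mesh) : Type :=
  {ι : String → ℕ // ∀ x : String, (x ∈ H.axes → ι x < H.size x) ∧ (x ∉ H.axes → ι x = 0)}

structure Dim where
  tile : ℕ
  axes : List String
  global : ℕ
deriving DecidableEq

abbrev DType := List Dim

def Mesh.WFDim (H : Mesh) (d : Dim) : Prop :=
  1 ≤ d.tile ∧ d.axes.Nodup ∧ (∀ x ∈ d.axes, x ∈ H.axes) ∧
    d.tile * (d.axes.map H.size).prod = d.global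

def Mesh.WFType (H : Mesh) (τ : DType) : Prop :=
  (∀ d ∈ τ, H.WFDim d) ∧ List.Pairwise (fun d e => ∀ x ∈ d.axes, x ∉ e.axes) τ

def globaltype (τ : DType) : List ℕ := τ.map Dim.global
def localtype (τ : DType) : List ℕ := τ.map Dim.tile
def localsize (τ : DType) : ℕ := (τ.map Dim.tile).prod

def typeAxes : DType → List String
  | [] => []
  | d :: τ => d.axes ++ typeAxes τ

/-- Base offset map of a distributed dimension, `⟦c{xs}n⟧_D`. -/
def dimOffset (H : Mesh) : ℕ → List String → (String → ℕ) → ℕ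
  | _, [], _ => 0
  | c, x :: xs, ι => c * ι x + dimOffset H (c * H.size x) xs ι

abbrev BOM (H : Mesh) : Type := IndexTuple H → List ℕ

/-- Base offset map of a distributed type, `⟦τ⟧_T`. -/
def typeOffset (H : Mesh) (τ : DType) : BOM H :=
  fun ι => τ.map (fun d => dimOffset H d.tile d.axes ι.val)

/-! ## Collective operations (high-level typing rules) -/

inductive Label where
  | allGather (i : ℕ)
  | dynSlice (i : ℕ) (x : String)
  | allToAll (i j : ℕ)
  | allPermute
deriving DecidableEq

inductive OpKind where
  | gather | slice | toAll | permute
deriving DecidableEq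

def Label.kind : Label → OpKind
  | .allGather _ => .gather
  | .dynSlice _ _ => .slice
  | .allToAll _ _ => .toAll
  | .allPermute => .permute

inductive Step (H : Mesh) : Label → DType → DType → Prop where
  | allGather {τ : DType} (i : ℕ) {c : ℕ} {x : String} {xs : List String} {s n : ℕ}
      (hwf : H.WFType τ) (hx : H.hasAxis x n)
      (hi : τ[i]? = some ⟨c, x :: xs, s⟩) :
      Step H (.allGather i) τ (τ.set i ⟨c * n, xs, s⟩)
  | dynSlice {τ : DType} (i : ℕ) (x : String) {c : ℕ} {xs : List String} {s n : ℕ}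
      (hwf : H.WFType τ) (hx : H.hasAxis x n) (hfresh : x ∉ typeAxes τ)
      (hi : τ[i]? = some ⟨c * n, xs, s⟩) :
      Step H (.dynSlice i x) τ (τ.set i ⟨c, x :: xs, s⟩)
  | allToAll {τ : DType} (i j : ℕ) {ci : ℕ} {x : String} {xsi : List String} {si cj : ℕ}
      {xsj : List String} {sj n : ℕ}
      (hwf : H.WFType τ) (hij : i ≠ j) (hx : H.hasAxis x n)
      (hi : τ[i]? = some ⟨ci, x :: xsi, si⟩)
      (hj : τ[j]? = some ⟨cj, xsj, sj⟩)
      (hdvd : n ∣ cj) :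
      Step H (.allToAll i j) τ ((τ.set i ⟨ci * n, xsi, si⟩).set j ⟨cj / n, x :: xsj, sj⟩)
  | allPermute {τ₁ τ₂ : DType}
      (hwf1 : H.WFType τ₁) (hwf2 : H.WFType τ₂)
      (hl : localtype τ₁ = localtype τ₂) (hg : globaltype τ₁ = globaltype τ₂) :
      Step H .allPermute τ₁ τ₂

/-! ## Sequences of collective operations -/

inductive CSeq (H : Mesh) : DType → DType → Type where
  | nil (τ : DType) : CSeq H τ τ
  | cons {τ₁ τ₂ τ₃ : DType} (p : Label) (h : Step H p τ₁ τ₂) (s : CSeq H τ₂ τ₃) : CSeq H τ₁ τ₃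

def CSeq.labels {H : Mesh} : {τ₁ τ₂ : DType} → CSeq H τ₁ τ₂ → List Label
  | _, _, .nil _ => []
  | _, _, .cons p _ s => p :: s.labels

def CSeq.typesList {H : Mesh} : {τ₁ τ₂ : DType} → CSeq H τ₁ τ₂ → List DType
  | _, _, .nil τ => [τ]
  | τ, _, .cons _ _ s => τ :: s.typesList

/-- The height 𝔥 of a sequence: the maximum `localsize` over all types in it. -/
def CSeq.height {H : Mesh} {τ₁ τ₂ : DType} (s : CSeq H τ₁ τ₂) : ℕ :=
  (s.typesList.map localsize).foldr max 0

/-- Cost of a single step with source `σ₁` and target `σ₂`. -/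
def stepCost (p : Label) (σ₁ σ₂ : DType) : ℕ :=
  match p with
  | .allGather _ => localsize σ₂
  | .dynSlice _ _ => 0
  | .allToAll _ _ => localsize σ₁
  | .allPermute => localsize σ₁

def CSeq.cost {H : Mesh} : {τ₁ τ₂ : DType} → CSeq H τ₁ τ₂ → ℕ
  | _, _, .nil _ => 0
  | _, _, @CSeq.cons _ σ₁ σ₂ _ p _ s => stepCost p σ₁ σ₂ + s.cost

/-- Normal form: labels matched by `dynSlice* {allToAll | allPermute}* allGather*`. -/
def NormalFormK (ks : List OpKind) : Prop :=
  ∃ a b c : List OpKind, ks = a ++ b ++ c ∧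
    (∀ k ∈ a, k = OpKind.slice) ∧
    (∀ k ∈ b, k = OpKind.toAll ∨ k = OpKind.permute) ∧
    (∀ k ∈ c, k = OpKind.gather)

/-! ## Weak collectives -/

/-- Equivalence of base offset maps. -/
def bomEquiv (H : Mesh) (β₁ β₂ : BOM H) : Prop :=
  ∃ π : Equiv.Perm (IndexTuple H), β₂ = β₁ ∘ π

/-- The weak collective relation `⟦τ₁⟧_E ▶^p ⟦τ₂⟧_E`, represented on types. -/
def WeakStep (H : Mesh) (p : Label) (τ₁ τ₂ : DType) : Prop :=
  p ≠ Label.allPermute ∧ H.WFType τ₁ ∧ H.WFType τ₂ ∧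
  ∃ σ₁ σ₂ : DType, Step H p σ₁ σ₂ ∧
    bomEquiv H (typeOffset H σ₁) (typeOffset H τ₁) ∧
    bomEquiv H (typeOffset H σ₂) (typeOffset H τ₂)

inductive WkSeq (H : Mesh) : DType → DType → Type where
  | nil (τ : DType) : WkSeq H τ τ
  | cons {τ₁ τ₂ τ₃ : DType} (p : Label) (h : WeakStep H p τ₁ τ₂) (s : WkSeq H τ₂ τ₃) :
      WkSeq H τ₁ τ₃

def WkSeq.labels {H : Mesh} : {τ₁ τ₂ : DType} → WkSeq H τ₁ τ₂ → List Label
  | _, _, .nil _ => []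
  | _, _, .cons p _ s => p :: s.labels

def WkSeq.typesList {H : Mesh} : {τ₁ τ₂ : DType} → WkSeq H τ₁ τ₂ → List DType
  | _, _, .nil τ => [τ]
  | τ, _, .cons _ _ s => τ :: s.typesList

def WkSeq.height {H : Mesh} {τ₁ τ₂ : DType} (s : WkSeq H τ₁ τ₂) : ℕ :=
  (s.typesList.map localsize).foldr max 0

def WkSeq.cost {H : Mesh} : {τ₁ τ₂ : DType} → WkSeq H τ₁ τ₂ → ℕ
  | _, _, .nil _ => 0
  | _, _, @WkSeq.cons _ σ₁ σ₂ _ p _ s => stepCost p σ₁ σ₂ + s.cost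

/-! ## Low-level MPI-style collectives on device assignments -/

abbrev DevMap (H : Mesh) (D : Type) := IndexTuple H ≃ D

structure DevAssign (H : Mesh) (D : Type) where
  dmap : DevMap H D
  bom : BOM H

inductive LLabel where
  | allGather (x : String)
  | allToAll (x : String) (j : ℕ)
  | dynSlice (i : ℕ) (x : String)
  | allPermute
deriving DecidableEq

def LLabel.kind : LLabel → OpKind
  | .allGather _ => .gather
  | .allToAll _ _ => .toAll
  | .dynSlice _ _ => .slice
  | .allPermute => .permute

inductive LStep (H : Mesh) (D : Type) : LLabel → DevAssign H D → DevAssign H D → Type where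
  | gather (τ : DType) (i : ℕ) (c : ℕ) (ys : List String) (x : String) (xs : List String)
      (s n : ℕ) (φ φ' : DevMap H D)
      (hwf : H.WFType τ) (hx : H.hasAxis x n)
      (hi : τ[i]? = some ⟨c, ys ++ x :: xs, s⟩)
      (hmap : typeOffset H (τ.set i ⟨c, x :: (ys ++ xs), s⟩) ∘ ⇑φ'.symm
            = typeOffset H τ ∘ ⇑φ.symm) :
      LStep H D (.allGather x) ⟨φ, typeOffset H τ⟩
        ⟨φ', typeOffset H (τ.set i ⟨c * n, ys ++ xs, s⟩)⟩
  | toAll (τ : DType) (i j : ℕ) (ci : ℕ) (ys : List String) (x : String) (xs : List String)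
      (si cj : ℕ) (xsj : List String) (sj n : ℕ) (φ φ' : DevMap H D)
      (hwf : H.WFType τ) (hij : i ≠ j) (hx : H.hasAxis x n)
      (hi : τ[i]? = some ⟨ci, ys ++ x :: xs, si⟩)
      (hj : τ[j]? = some ⟨cj, xsj, sj⟩)
      (hdvd : n ∣ cj)
      (hmap : typeOffset H (τ.set i ⟨ci, x :: (ys ++ xs), si⟩) ∘ ⇑φ'.symm
            = typeOffset H τ ∘ ⇑φ.symm) :
      LStep H D (.allToAll x j) ⟨φ, typeOffset H τ⟩
        ⟨φ', typeOffset H ((τ.set i ⟨ci * n, ys ++ xs, si⟩).set j ⟨cj / n, x :: xsj, sj⟩)⟩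
  | slice (τ : DType) (i : ℕ) (x : String) (c : ℕ) (xs : List String) (s n : ℕ)
      (φ : DevMap H D)
      (hwf : H.WFType τ) (hx : H.hasAxis x n) (hfresh : x ∉ typeAxes τ)
      (hi : τ[i]? = some ⟨c * n, xs, s⟩) :
      LStep H D (.dynSlice i x) ⟨φ, typeOffset H τ⟩ ⟨φ, typeOffset H (τ.set i ⟨c, x :: xs, s⟩)⟩
  | permute (τ : DType) (ρ : Equiv.Perm (IndexTuple H)) (β' : BOM H)
      (φ φ' : DevMap H D) (π : Equiv.Perm D)
      (hwf : H.WFType τ)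
      (hmap : β' ∘ ⇑φ'.symm = (typeOffset H τ ∘ ⇑ρ) ∘ ⇑φ.symm ∘ ⇑π) :
      LStep H D .allPermute ⟨φ, typeOffset H τ ∘ ⇑ρ⟩ ⟨φ', β'⟩

def LStep.cost {H : Mesh} {D : Type} :
    {l : LLabel} → {a b : DevAssign H D} → LStep H D l a b → ℕ
  | _, _, _, .gather τ i c ys x xs s n .. => localsize (τ.set i ⟨c * n, ys ++ xs, s⟩)
  | _, _, _, .toAll τ .. => localsize τ
  | _, _, _, .slice .. => 0
  | _, _, _, .permute τ .. => localsize τ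

inductive LoSeq (H : Mesh) (D : Type) : DevAssign H D → DevAssign H D → Type where
  | nil (a : DevAssign H D) : LoSeq H D a a
  | cons {a b c : DevAssign H D} (l : LLabel) (st : LStep H D l a b) (s : LoSeq H D b c) :
      LoSeq H D a c

def LoSeq.labels {H : Mesh} {D : Type} : {a b : DevAssign H D} → LoSeq H D a b → List LLabel
  | _, _, .nil _ => []
  | _, _, .cons l _ s => l :: s.labels

def LoSeq.states {H : Mesh} {D : Type} : {a b : DevAssign H D} → LoSeq H D a b → List (DevAssign H D)
  | _, _, .nil a => [a]
  | a, _, .cons _ _ s => a :: s.states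

def LoSeq.cost {H : Mesh} {D : Type} : {a b : DevAssign H D} → LoSeq H D a b → ℕ
  | _, _, .nil _ => 0
  | _, _, .cons _ st s => st.cost + s.cost
/-! ### Helper lemmas -/

theorem mem_typeAxes {τ : DType} {a : String} :
    a ∈ typeAxes τ ↔ ∃ k, ∃ h : k < τ.length, a ∈ (τ[k]).axes := by
  induction τ with
  | nil => simp [typeAxes]
  | cons d τ ih =>
    simp only [typeAxes, List.mem_append, ih]
    constructor
    · rintro (h | ⟨k, hk, hm⟩)
      · exact ⟨0, by simp, h⟩
      · exact ⟨k+1, by simpa using hk, hm⟩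
    · rintro ⟨k, hk, hm⟩
      cases k with
      | zero => exact Or.inl hm
      | succ k => exact Or.inr ⟨k, by simpa using hk, hm⟩

theorem wf_iff {H : Mesh} {τ : DType} :
    H.WFType τ ↔ (∀ k (h : k < τ.length), H.WFDim τ[k]) ∧
      (∀ k l (hk : k < τ.length) (hl : l < τ.length), k ≠ l →
        ∀ a ∈ (τ[k]).axes, a ∉ (τ[l]).axes) := by
  constructor
  · rintro ⟨h1, h2⟩
    rw [List.pairwise_iff_getElem] at h2
    refine ⟨fun k h => h1 _ (List.getElem_mem h), fun k l hk hl hkl a ha hb => ?_⟩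
    rcases lt_or_gt_of_ne hkl with h | h
    · exact h2 k l hk hl h a ha hb
    · exact h2 l k hl hk h a hb ha
  · rintro ⟨h1, h2⟩
    refine ⟨fun d hd => ?_, ?_⟩
    · obtain ⟨k, hk, rfl⟩ := List.getElem_of_mem hd
      exact h1 k hk
    · rw [List.pairwise_iff_getElem]
      intro k l hk hl hkl
      exact h2 k l hk hl (Nat.ne_of_lt hkl)

theorem wf_set {H : Mesh} {τ : DType} (hτ : H.WFType τ) {k : ℕ} (hk : k < τ.length)
    {d : Dim} (hd : H.WFDim d)
    (hcov : ∀ a ∈ d.axes, a ∈ (τ[k]).axes ∨ a ∉ typeAxes τ) :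
    H.WFType (τ.set k d) := by
  rw [wf_iff] at hτ ⊢
  obtain ⟨h1, h2⟩ := hτ
  have len : (τ.set k d).length = τ.length := by simp
  constructor
  · intro m hm
    rw [List.getElem_set]
    split
    · exact hd
    · exact h1 m (len ▸ hm)
  · intro m l hm hl hml a ha hb
    rw [List.getElem_set] at ha hb
    rw [len] at hm hl
    split at ha <;> split at hb
    · omega
    · rcases hcov a ha with h | h
      · exact h2 k l hk hl (by omega) a h hb
      · exact h (mem_typeAxes.2 ⟨l, hl, hb⟩)
    · rcases hcov a hb with h | h
      · exact h2 m k hm hk (by omega) a ha h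
      · exact h (mem_typeAxes.2 ⟨m, hm, ha⟩)
    · exact h2 m l hm hl hml a ha hb
theorem hasAxis_pos {H : Mesh} {x : String} {n : ℕ} (hx : H.hasAxis x n) : 1 ≤ n :=
  hx.2 ▸ H.size_pos x hx.1

theorem toAll_wf {H : Mesh} {τ : DType} {i j ci n : ℕ} {x : String} {xsi : List String}
    {si cj : ℕ} {xsj : List String} {sj : ℕ}
    (hwf : H.WFType τ) (hij : i ≠ j) (hx : H.hasAxis x n)
    (hi : τ[i]? = some ⟨ci, x :: xsi, si⟩)
    (hj : τ[j]? = some ⟨cj, xsj, sj⟩)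
    (hdvd : n ∣ cj) :
    H.WFType ((τ.set i ⟨ci * n, xsi, si⟩).set j ⟨cj / n, x :: xsj, sj⟩) := by
  rw [List.getElem?_eq_some_iff] at hi hj
  obtain ⟨hilt, hieq⟩ := hi
  obtain ⟨hjlt, hjeq⟩ := hj
  have hwfi : H.WFDim ⟨ci, x :: xsi, si⟩ := hieq ▸ (wf_iff.1 hwf).1 i hilt
  have hwfj : H.WFDim ⟨cj, xsj, sj⟩ := hjeq ▸ (wf_iff.1 hwf).1 j hjlt
  have hn : 1 ≤ n := hasAxis_pos hx
  have hdisj := (wf_iff.1 hwf).2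
  have hxj : x ∉ xsj := by
    have := hdisj i j hilt hjlt hij x (by rw [hieq]; exact List.mem_cons_self)
    rw [hjeq] at this; exact this
  obtain ⟨hci, hnodi, hmemi, hprodi⟩ := hwfi
  obtain ⟨hcj, hnodj, hmemj, hprodj⟩ := hwfj
  simp only at hci hnodi hmemi hprodi hcj hnodj hmemj hprodj
  have step1 : H.WFType (τ.set i ⟨ci * n, xsi, si⟩) := by
    apply wf_set hwf hilt
    · refine ⟨Nat.mul_pos hci hn, (List.nodup_cons.1 hnodi).2,
        fun a ha => hmemi a (List.mem_cons_of_mem _ ha), ?_⟩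
      simp only
      rw [← hprodi, List.map_cons, List.prod_cons, hx.2]; ring
    · intro a ha; left; rw [hieq]; exact List.mem_cons_of_mem _ ha
  apply wf_set step1 (by simpa using hjlt)
  · refine ⟨Nat.div_pos (Nat.le_of_dvd (by omega) hdvd) (by omega),
      List.nodup_cons.2 ⟨hxj, hnodj⟩,
      fun a ha => ?_, ?_⟩
    · rcases List.mem_cons.1 ha with rfl | ha
      · exact hx.1
      · exact hmemj a ha
    · simp only [List.map_cons, List.prod_cons, hx.2, ← hprodj]
      rw [← Nat.mul_assoc, Nat.div_mul_cancel hdvd]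
  · intro a ha
    rcases List.mem_cons.1 ha with rfl | ha
    · right
      intro hmem
      obtain ⟨m, hm, hma⟩ := mem_typeAxes.1 hmem
      rw [List.getElem_set] at hma
      split at hma
      · exact (List.nodup_cons.1 hnodi).1 hma
      · have hm' : m < τ.length := by simpa using hm
        rcases eq_or_ne m i with rfl | hmi
        · simp_all
        · exact hdisj i m hilt hm' (Ne.symm hmi) a
            (by rw [hieq]; exact List.mem_cons_self) hma
    · left
      rw [List.getElem_set]
      split
      · omega
      · rw [hjeq]; exact ha

theorem gather_insert {H : Mesh} {τ : DType} (hτ : H.WFType τ) {k : ℕ} (hk : k < τ.length)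
    {c m : ℕ} {y : String} (hy : H.hasAxis y m) (hfresh : y ∉ typeAxes τ)
    (ht : (τ[k]).tile = c * m) (hc : 1 ≤ c) :
    H.WFType (τ.set k ⟨c, y :: (τ[k]).axes, (τ[k]).global⟩) ∧
      Step H (.allGather k) (τ.set k ⟨c, y :: (τ[k]).axes, (τ[k]).global⟩) τ := by
  have hwfk : H.WFDim τ[k] := (wf_iff.1 hτ).1 k hk
  obtain ⟨h1, h2, h3, h4⟩ := hwfk
  have hyk : y ∉ (τ[k]).axes := fun h => hfresh (mem_typeAxes.2 ⟨k, hk, h⟩)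
  have hwfd : H.WFDim ⟨c, y :: (τ[k]).axes, (τ[k]).global⟩ := by
    refine ⟨hc, List.nodup_cons.2 ⟨hyk, h2⟩, fun a ha => ?_, ?_⟩
    · rcases List.mem_cons.1 ha with rfl | ha
      · exact hy.1
      · exact h3 a ha
    · simp only [List.map_cons, List.prod_cons, hy.2]
      rw [← h4, ht]; ring
  have hwf' : H.WFType (τ.set k ⟨c, y :: (τ[k]).axes, (τ[k]).global⟩) :=
    wf_set hτ hk hwfd (by
      intro a ha
      rcases List.mem_cons.1 ha with rfl | ha
      · exact Or.inr hfresh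
      · exact Or.inl ha)
  refine ⟨hwf', ?_⟩
  have hstep := Step.allGather (H := H) (τ := τ.set k ⟨c, y :: (τ[k]).axes, (τ[k]).global⟩)
    k (c := c) (x := y) (xs := (τ[k]).axes) (s := (τ[k]).global) (n := m) hwf' hy (by
      rw [List.getElem?_eq_some_iff]
      refine ⟨by simpa using hk, ?_⟩
      rw [List.getElem_set]; simp)
  have heq : (τ.set k ⟨c, y :: (τ[k]).axes, (τ[k]).global⟩).set k
      ⟨c * m, (τ[k]).axes, (τ[k]).global⟩ = τ := by
    rw [List.set_set, ← ht]
    apply List.ext_getElem (by simp)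
    intro a ha1 ha2
    rw [List.getElem_set]
    split
    · subst a; rfl
    · rfl
  rwa [heq] at hstep
theorem wf_tail {H : Mesh} {d : Dim} {τ : DType} (h : H.WFType (d :: τ)) : H.WFType τ :=
  ⟨fun e he => h.1 e (List.mem_cons_of_mem _ he), (List.pairwise_cons.1 h.2).2⟩

theorem prime_prod_count (l : List ℕ) (hl : ∀ p ∈ l, p.Prime) (n : ℕ) :
    l.prod.factorization n = l.count n := by
  induction l with
  | nil => simp
  | cons p l ih =>
    have hp : p.Prime := hl p (List.mem_cons_self)
    have hl' : ∀ q ∈ l, q.Prime := fun q hq => hl q (List.mem_cons_of_mem _ hq)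
    have hprod : l.prod ≠ 0 := (List.prod_pos (fun q hq => (hl' q hq).pos)).ne'
    rw [List.prod_cons, Nat.factorization_mul hp.ne_zero hprod]
    simp only [Finsupp.coe_add, Pi.add_apply, ih hl', List.count_cons,
      hp.factorization, Finsupp.single_apply]
    rcases eq_or_ne p n with rfl | h
    · simp [Nat.add_comm]
    · simp [h, Ne.symm h]

theorem count_size_eq {H : Mesh} (hP : ∀ x ∈ H.axes, (H.size x).Prime)
    {τ₁ τ₂ : DType} (h1 : H.WFType τ₁) (h2 : H.WFType τ₂)
    (hl : localtype τ₁ = localtype τ₂) (hg : globaltype τ₁ = globaltype τ₂) (n : ℕ) :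
    ((typeAxes τ₁).map H.size).count n = ((typeAxes τ₂).map H.size).count n := by
  induction τ₁ generalizing τ₂ with
  | nil =>
    cases τ₂ with
    | nil => rfl
    | cons d τ => simp [localtype] at hl
  | cons d τ ih =>
    cases τ₂ with
    | nil => simp [localtype] at hl
    | cons e τ' =>
      simp only [localtype, globaltype, List.map_cons, List.cons.injEq] at hl hg
      have hd : H.WFDim d := h1.1 d (List.mem_cons_self)
      have he : H.WFDim e := h2.1 e (List.mem_cons_self)
      have hprodeq : (d.axes.map H.size).prod = (e.axes.map H.size).prod := by
        have := hd.2.2.2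
        have h2e := he.2.2.2
        rw [← hl.1] at h2e
        rw [← hg.1] at h2e
        exact Nat.eq_of_mul_eq_mul_left (by have := hd.1; omega) (this.trans h2e.symm)
      have hpd : ∀ p ∈ d.axes.map H.size, p.Prime := by
        intro p hp
        obtain ⟨a, ha, rfl⟩ := List.mem_map.1 hp
        exact hP a (hd.2.2.1 a ha)
      have hpe : ∀ p ∈ e.axes.map H.size, p.Prime := by
        intro p hp
        obtain ⟨a, ha, rfl⟩ := List.mem_map.1 hp
        exact hP a (he.2.2.1 a ha)
      have hcnt : (d.axes.map H.size).count n = (e.axes.map H.size).count n := by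
        rw [← prime_prod_count _ hpd, ← prime_prod_count _ hpe, hprodeq]
      simp only [typeAxes, List.map_append, List.count_append]
      rw [hcnt, ih (wf_tail h1) (wf_tail h2) hl.2 hg.2]

theorem count_map_eq (l : List String) (f : String → ℕ) (n : ℕ) :
    (l.map f).count n = (l.filter (fun a => f a = n)).length := by
  induction l with
  | nil => rfl
  | cons a l ih =>
    rcases eq_or_ne (f a) n with h | h
    · simp [List.count_cons, h, ih]
    · simp [List.count_cons, h, Ne.symm h, ih]

theorem typeAxes_nodup {H : Mesh} {τ : DType} (h : H.WFType τ) : (typeAxes τ).Nodup := by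
  induction τ with
  | nil => simp [typeAxes]
  | cons d τ ih =>
    rw [typeAxes, List.nodup_append]
    refine ⟨(h.1 d (List.mem_cons_self)).2.1, ih (wf_tail h), ?_⟩
    intro a ha b hamem rfl
    obtain ⟨k, hk, hka⟩ := mem_typeAxes.1 hamem
    exact (List.pairwise_cons.1 h.2).1 _ (List.getElem_mem hk) a ha hka

/-- Existence of a fresh axis of size `n` for `τ₂`, given one for `τ₁`. -/
theorem fresh_axis {H : Mesh} (hP : ∀ x ∈ H.axes, (H.size x).Prime)
    {τ₁ τ₂ : DType} (h1 : H.WFType τ₁) (h2 : H.WFType τ₂)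
    (hl : localtype τ₁ = localtype τ₂) (hg : globaltype τ₁ = globaltype τ₂)
    {x : String} {n : ℕ} (hx : H.hasAxis x n) (hx1 : x ∉ typeAxes τ₁) :
    ∃ y, H.hasAxis y n ∧ y ∉ typeAxes τ₂ := by
  classical
  set A₁ := (typeAxes τ₁).filter (fun a => H.size a = n) with hA₁
  set A₂ := (typeAxes τ₂).filter (fun a => H.size a = n) with hA₂
  have hcount : A₁.length = A₂.length := by
    have h := count_size_eq hP h1 h2 hl hg n
    rw [count_map_eq, count_map_eq] at h
    exact h
  have hnd1 : A₁.Nodup := (typeAxes_nodup h1).filter _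
  have hnd2 : A₂.Nodup := (typeAxes_nodup h2).filter _
  by_cases hsub : ∀ y ∈ A₁, y ∈ A₂
  · -- then A₁ ⊆ A₂ with equal lengths, so A₂ ⊆ A₁; x works
    have hperm : ∀ y ∈ A₂, y ∈ A₁ := by
      have : List.Perm A₁ A₂ := List.Subperm.perm_of_length_le
        (List.subperm_of_subset hnd1 hsub) (le_of_eq hcount.symm)
      intro y hy; exact this.mem_iff.2 hy
    refine ⟨x, hx, fun hmem => ?_⟩
    have hxA2 : x ∈ A₂ := List.mem_filter.2 ⟨hmem, by simp [hx.2]⟩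
    have := List.mem_filter.1 (hperm x hxA2)
    exact hx1 this.1
  · push_neg at hsub
    obtain ⟨y, hy1, hy2⟩ := hsub
    obtain ⟨hymem, hysize⟩ := List.mem_filter.1 hy1
    have hysize' : H.size y = n := by simpa using hysize
    obtain ⟨k, hk, hka⟩ := mem_typeAxes.1 hymem
    have hyH : y ∈ H.axes := ((wf_iff.1 h1).1 k hk).2.2.1 y hka
    refine ⟨y, ⟨hyH, hysize'⟩, fun hmem => ?_⟩
    exact hy2 (List.mem_filter.2 ⟨hmem, by simp [hysize']⟩)
theorem not_mem_typeAxes_set {τ : DType} {x : String} {k : ℕ} {d : Dim}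
    (h : x ∉ typeAxes τ) (hd : x ∉ d.axes) : x ∉ typeAxes (τ.set k d) := by
  intro hmem
  obtain ⟨m, hm, hma⟩ := mem_typeAxes.1 hmem
  rw [List.getElem_set] at hma
  split at hma
  · exact hd hma
  · exact h (mem_typeAxes.2 ⟨m, by simpa using hm, hma⟩)

theorem head_fresh {H : Mesh} {τ : DType} (hwf : H.WFType τ) {i : ℕ} (hilt : i < τ.length)
    {c : ℕ} {x : String} {xs : List String} {s : ℕ} (heq : τ[i] = ⟨c, x :: xs, s⟩)
    {d : Dim} (hd : x ∉ d.axes) : x ∉ typeAxes (τ.set i d) := by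
  intro hmem
  obtain ⟨m, hm, hma⟩ := mem_typeAxes.1 hmem
  rw [List.getElem_set] at hma
  split at hma
  · exact hd hma
  · have hm' : m < τ.length := by simpa using hm
    exact (wf_iff.1 hwf).2 i m hilt hm' (by omega) x
      (by rw [heq]; exact List.mem_cons_self) hma

theorem set_self {α : Type _} (l : List α) (i : ℕ) {a : α}
    (ha : ∀ h : i < l.length, l[i] = a) : l.set i a = l := by
  rcases Nat.lt_or_ge i l.length with h | h
  · apply List.ext_getElem (by simp)
    intro k h1 h2
    rw [List.getElem_set]
    split
    · subst k; exact (ha h).symm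
    · rfl
  · exact List.set_eq_of_length_le (by simpa using h)

theorem localtype_set (τ : DType) (k : ℕ) (d : Dim) :
    localtype (τ.set k d) = (localtype τ).set k d.tile := by
  simp [localtype, List.map_set]

theorem globaltype_set (τ : DType) (k : ℕ) (d : Dim) :
    globaltype (τ.set k d) = (globaltype τ).set k d.global := by
  simp [globaltype, List.map_set]

/-- Rising Edge Lemma. -/
theorem stmt3 (H : Mesh) (hP : ∀ x ∈ H.axes, (H.size x).Prime)
    (σ₀ σ₁ σ₂ : DType) (i : ℕ) (p : Label)
    (hp : p.kind = OpKind.toAll ∨ p.kind = OpKind.permute)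
    (h1 : Step H (.allGather i) σ₀ σ₁) (h2 : Step H p σ₁ σ₂) :
    ∃ (σ₁' : DType) (j : ℕ) (s : CSeq H σ₀ σ₁'),
      H.WFType σ₁' ∧
      s.labels.length ≤ 2 ∧
      (∀ l ∈ s.labels, l.kind = OpKind.toAll ∨ l.kind = OpKind.permute) ∧
      (s.labels.filter (fun l => decide (l.kind = OpKind.toAll))).length ≤ 1 ∧
      Step H (.allGather j) σ₁' σ₂ := by
  cases h1 with
  | allGather i hwf0 hx hi0 =>
    rename_i c x xs s n
    cases h2 with
    | allGather => simp [Label.kind] at hp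
    | dynSlice => simp [Label.kind] at hp
    | allPermute hwf1 hwf2 hl hg =>
      rw [List.getElem?_eq_some_iff] at hi0
      obtain ⟨hilt, hieq⟩ := hi0
      have hwfd0 := (wf_iff.1 hwf0).1 i hilt
      rw [hieq] at hwfd0
      have hc : 1 ≤ c := hwfd0.1
      have hxxs : x ∉ xs := (List.nodup_cons.1 hwfd0.2.1).1
      have hxfresh1 : x ∉ typeAxes (σ₀.set i ⟨c*n, xs, s⟩) :=
        head_fresh hwf0 hilt hieq hxxs
      obtain ⟨y, hy, hyfresh⟩ := fresh_axis hP hwf1 hwf2 hl hg hx hxfresh1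
      have hlen2 : σ₂.length = σ₀.length := by
        have h := congrArg List.length hl
        simpa [localtype] using h.symm
      have hilt2 : i < σ₂.length := by rw [hlen2]; exact hilt
      have htile : (σ₂[i]'hilt2).tile = c * n := by
        have h := hl
        rw [localtype_set] at h
        have h2 := congrArg (fun l => l[i]?) h
        simp only [List.getElem?_set, localtype, List.getElem?_map, List.length_map,
          hilt, if_pos rfl, List.getElem?_eq_getElem hilt2] at h2
        simp only [show i < σ₀.length from hilt, if_true, Option.map_some] at h2
        exact (Option.some.inj h2).symm
      have hglob : (σ₂[i]'hilt2).global = s := by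
        have h := hg
        rw [globaltype_set] at h
        have h2 := congrArg (fun l => l[i]?) h
        simp only [List.getElem?_set, globaltype, List.getElem?_map, List.length_map,
          hilt, if_pos rfl, List.getElem?_eq_getElem hilt2] at h2
        simp only [show i < σ₀.length from hilt, if_true, Option.map_some] at h2
        exact (Option.some.inj h2).symm
      obtain ⟨hwf', hstep⟩ := gather_insert hwf2 hilt2 hy hyfresh htile hc
      have hperm : Step H .allPermute σ₀
          (σ₂.set i ⟨c, y :: (σ₂[i]'hilt2).axes, (σ₂[i]'hilt2).global⟩) := by
        refine Step.allPermute hwf0 hwf' ?_ ?_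
        · rw [localtype_set, ← hl, localtype_set, List.set_set]
          exact (set_self _ _ (fun h => by
            simp [localtype, List.getElem_map, hieq])).symm
        · rw [globaltype_set, hglob, ← hg, globaltype_set, List.set_set]
          exact (set_self _ _ (fun h => by
            simp [globaltype, List.getElem_map, hieq])).symm
      refine ⟨_, i, .cons .allPermute hperm (.nil _), hwf', ?_, ?_, ?_, hstep⟩ <;>
        simp [CSeq.labels, Label.kind]
    | allToAll i' j' hwf1 hij hx' hi' hj' hdvd =>
      rename_i ci x' xsi' si cj xsj' sj n'
      -- keep option-form copies
      have hi0' := hi0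
      have hi'' := hi'
      have hj'' := hj'
      have hwf2 : H.WFType (((σ₀.set i ⟨c*n, xs, s⟩).set i' ⟨ci * n', xsi', si⟩).set j'
          ⟨cj / n', x' :: xsj', sj⟩) := toAll_wf hwf1 hij hx' hi' hj' hdvd
      rw [List.getElem?_eq_some_iff] at hi0 hi' hj'
      obtain ⟨hilt, hieq⟩ := hi0
      obtain ⟨hi'lt, hi'eq⟩ := hi'
      obtain ⟨hj'lt, hj'eq⟩ := hj'
      have hi'lt0 : i' < σ₀.length := by simpa using hi'lt
      have hj'lt0 : j' < σ₀.length := by simpa using hj'lt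
      have hwfd0 := (wf_iff.1 hwf0).1 i hilt
      rw [hieq] at hwfd0
      have hc : 1 ≤ c := hwfd0.1
      have hxxs : x ∉ xs := (List.nodup_cons.1 hwfd0.2.1).1
      have hxfresh1 : x ∉ typeAxes (σ₀.set i ⟨c*n, xs, s⟩) :=
        head_fresh hwf0 hilt hieq hxxs
      have hx'mem : x' ∈ typeAxes (σ₀.set i ⟨c*n, xs, s⟩) :=
        mem_typeAxes.2 ⟨i', hi'lt, by rw [hi'eq]; exact List.mem_cons_self⟩
      have hxx' : x ≠ x' := fun h => hxfresh1 (h ▸ hx'mem)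
      have hxxsi' : x ∉ xsi' := fun hm => hxfresh1
        (mem_typeAxes.2 ⟨i', hi'lt, by rw [hi'eq]; exact List.mem_cons_of_mem _ hm⟩)
      have hxxsj' : x ∉ xsj' := fun hm => hxfresh1
        (mem_typeAxes.2 ⟨j', hj'lt, by rw [hj'eq]; exact hm⟩)
      have hxfresh2 : x ∉ typeAxes (((σ₀.set i ⟨c*n, xs, s⟩).set i' ⟨ci * n', xsi', si⟩).set j'
          ⟨cj / n', x' :: xsj', sj⟩) := by
        apply not_mem_typeAxes_set (not_mem_typeAxes_set hxfresh1 hxxsi')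
        intro hm
        rcases List.mem_cons.1 hm with h | h
        · exact hxx' h
        · exact hxxsj' h
      have hnp : n.Prime := hx.2 ▸ hP x hx.1
      have hn'p : n'.Prime := hx'.2 ▸ hP x' hx'.1
      have hn : 1 ≤ n := hnp.one_lt.le.trans' (by omega)
      have hn' : 1 ≤ n' := hn'p.one_lt.le.trans' (by omega)
      rcases eq_or_ne i i' with heq | hii'
      · -- T2 : the gathered dimension is the source of the allToAll
        subst heq
        have hkey : (⟨c * n, xs, s⟩ : Dim) = ⟨ci, x' :: xsi', si⟩ := by
          rw [← hi'eq, List.getElem_set, if_pos rfl]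
        injection hkey with hci hxs hsi
        subst hci hxs hsi
        have hj'eq0 : σ₀[j']'hj'lt0 = ⟨cj, xsj', sj⟩ := by
          rw [← hj'eq, List.getElem_set, if_neg (by omega)]
        obtain ⟨hnx, hnod2⟩ := List.nodup_cons.1 hwfd0.2.1
        obtain ⟨hnx', hnod3⟩ := List.nodup_cons.1 hnod2
        have hwfdτ : H.WFDim ⟨c, x' :: x :: xsi', s⟩ := by
          refine ⟨hc, ?_, ?_, ?_⟩
          · refine List.nodup_cons.2 ⟨?_, List.nodup_cons.2
              ⟨fun hm => hnx (List.mem_cons_of_mem _ hm), hnod3⟩⟩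
            intro hm
            rcases List.mem_cons.1 hm with h | h
            · exact hnx (h ▸ List.mem_cons_self)
            · exact hnx' h
          · intro a ha
            apply hwfd0.2.2.1
            simp only [List.mem_cons] at ha ⊢
            tauto
          · have h := hwfd0.2.2.2
            simp only [List.map_cons, List.prod_cons] at h ⊢
            rw [← h]; ring
        have hwfτ : H.WFType (σ₀.set i ⟨c, x' :: x :: xsi', s⟩) := by
          refine wf_set hwf0 hilt hwfdτ ?_
          intro a ha
          left
          rw [hieq]
          simp only [List.mem_cons] at ha ⊢
          tauto
        have hpermτ : Step H .allPermute σ₀ (σ₀.set i ⟨c, x' :: x :: xsi', s⟩) := by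
          refine Step.allPermute hwf0 hwfτ ?_ ?_
          · rw [localtype_set]
            exact (set_self _ _ (fun h => by simp [localtype, List.getElem_map, hieq])).symm
          · rw [globaltype_set]
            exact (set_self _ _ (fun h => by simp [globaltype, List.getElem_map, hieq])).symm
        have hiττ : (σ₀.set i ⟨c, x' :: x :: xsi', s⟩)[i]? = some ⟨c, x' :: (x :: xsi'), s⟩ := by
          rw [List.getElem?_eq_some_iff]
          exact ⟨by simpa using hilt, by rw [List.getElem_set, if_pos rfl]⟩
        have hjττ : (σ₀.set i ⟨c, x' :: x :: xsi', s⟩)[j']? = some ⟨cj, xsj', sj⟩ := by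
          rw [List.getElem?_eq_some_iff]
          exact ⟨by simpa using hj'lt0, by rw [List.getElem_set, if_neg (by omega)]; exact hj'eq0⟩
        have stpA : Step H (.allToAll i j') (σ₀.set i ⟨c, x' :: x :: xsi', s⟩)
            (((σ₀.set i ⟨c, x' :: x :: xsi', s⟩).set i ⟨c * n', x :: xsi', s⟩).set j'
              ⟨cj / n', x' :: xsj', sj⟩) :=
          Step.allToAll i j' hwfτ hij hx' hiττ hjττ hdvd
        have hwfσ₁' : H.WFType (((σ₀.set i ⟨c, x' :: x :: xsi', s⟩).set i ⟨c * n', x :: xsi', s⟩).set j'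
            ⟨cj / n', x' :: xsj', sj⟩) := toAll_wf hwfτ hij hx' hiττ hjττ hdvd
        rw [List.set_set] at stpA hwfσ₁'
        have hstep0 := Step.allGather (H := H)
          (τ := (σ₀.set i ⟨c * n', x :: xsi', s⟩).set j' ⟨cj / n', x' :: xsj', sj⟩)
          i (c := c * n') (x := x) (xs := xsi') (s := s) (n := n) hwfσ₁' hx (by
            rw [List.getElem?_eq_some_iff]
            refine ⟨by simpa using hilt, ?_⟩
            rw [List.getElem_set, if_neg (by omega), List.getElem_set, if_pos rfl])
        have hfin : ((σ₀.set i ⟨c * n', x :: xsi', s⟩).set j' ⟨cj / n', x' :: xsj', sj⟩).set i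
              ⟨c * n' * n, xsi', s⟩ =
            ((σ₀.set i ⟨c * n, x' :: xsi', s⟩).set i ⟨c * n * n', xsi', s⟩).set j'
              ⟨cj / n', x' :: xsj', sj⟩ := by
          rw [List.set_comm _ _ (show j' ≠ i by omega), List.set_set, List.set_set,
            show c * n' * n = c * n * n' by ring]
        rw [hfin] at hstep0
        exact ⟨_, i, .cons .allPermute hpermτ (.cons (.allToAll i j') stpA (.nil _)),
          hwfσ₁', by simp [CSeq.labels], by simp [CSeq.labels, Label.kind],
          by simp [CSeq.labels, Label.kind], hstep0⟩
      · rcases eq_or_ne i j' with heq2 | hij'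
        · -- T3 : the gathered dimension is the target of the allToAll
          subst heq2
          rcases eq_or_ne n' n with heq3 | hnn'
          · -- T3a
            subst heq3
            have hkey : (⟨c * n', xs, s⟩ : Dim) = ⟨cj, xsj', sj⟩ := by
              rw [← hj'eq, List.getElem_set, if_pos rfl]
            injection hkey with hcj hxsj hsj
            subst hcj hxsj hsj
            have hi'eq0 : σ₀[i']'hi'lt0 = ⟨ci, x' :: xsi', si⟩ := by
              rw [← hi'eq, List.getElem_set, if_neg (by omega)]
            have hwfdi' := (wf_iff.1 hwf0).1 i' hi'lt0
            rw [hi'eq0] at hwfdi'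
            have hci : 1 ≤ ci := hwfdi'.1
            have hilt2' : i' < (((σ₀.set i ⟨c*n', xs, s⟩).set i' ⟨ci * n', xsi', si⟩).set i
                ⟨c * n' / n', x' :: xs, s⟩).length := by simpa using hi'lt0
            have hσ₂i' : (((σ₀.set i ⟨c*n', xs, s⟩).set i' ⟨ci * n', xsi', si⟩).set i
                ⟨c * n' / n', x' :: xs, s⟩)[i']'hilt2' = ⟨ci * n', xsi', si⟩ := by
              rw [List.getElem_set, if_neg (by omega), List.getElem_set, if_pos rfl]
            obtain ⟨hwf', hstep⟩ := gather_insert (c := ci) hwf2 hilt2' hx hxfresh2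
              (by rw [hσ₂i']) hci
            simp only [hσ₂i'] at hwf' hstep
            have hdivc : c * n' / n' = c := Nat.mul_div_cancel c (by omega)
            have hperm : Step H .allPermute σ₀
                ((((σ₀.set i ⟨c*n', xs, s⟩).set i' ⟨ci * n', xsi', si⟩).set i
                  ⟨c * n' / n', x' :: xs, s⟩).set i' ⟨ci, x :: xsi', si⟩) := by
              refine Step.allPermute hwf0 hwf' ?_ ?_
              · have hsetl : (localtype σ₀).set i c = localtype σ₀ :=
                  set_self _ _ (fun h => by simp [localtype, List.getElem_map, hieq])
                have hsetl2 : (localtype σ₀).set i' ci = localtype σ₀ :=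
                  set_self _ _ (fun h => by simp [localtype, List.getElem_map, hi'eq0])
                simp only [localtype_set, hdivc]
                rw [List.set_comm _ _ (show i' ≠ i by omega), List.set_set, List.set_set,
                  hsetl, hsetl2]
              · have hsetg : (globaltype σ₀).set i s = globaltype σ₀ :=
                  set_self _ _ (fun h => by simp [globaltype, List.getElem_map, hieq])
                have hsetg2 : (globaltype σ₀).set i' si = globaltype σ₀ :=
                  set_self _ _ (fun h => by simp [globaltype, List.getElem_map, hi'eq0])
                simp only [globaltype_set]
                rw [List.set_comm _ _ (show i' ≠ i by omega), List.set_set, List.set_set,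
                  hsetg, hsetg2]
            exact ⟨_, i', .cons .allPermute hperm (.nil _), hwf',
              by simp [CSeq.labels], by simp [CSeq.labels, Label.kind],
              by simp [CSeq.labels, Label.kind], hstep⟩
          · -- T3b
            have hkey : (⟨c * n, xs, s⟩ : Dim) = ⟨cj, xsj', sj⟩ := by
              rw [← hj'eq, List.getElem_set, if_pos rfl]
            injection hkey with hcj hxsj hsj
            subst hcj hxsj hsj
            have hi'eq0 : σ₀[i']'hi'lt0 = ⟨ci, x' :: xsi', si⟩ := by
              rw [← hi'eq, List.getElem_set, if_neg (by omega)]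
            obtain ⟨c'', hc''⟩ : n' ∣ c :=
              (Nat.Coprime.dvd_of_dvd_mul_right ((Nat.coprime_primes hn'p hnp).2 hnn') hdvd)
            subst hc''
            have hdiv : n' * c'' * n / n' = c'' * n := by
              rw [Nat.mul_assoc]; exact Nat.mul_div_cancel_left _ (by omega)
            have hdiv2 : n' * c'' / n' = c'' := Nat.mul_div_cancel_left _ (by omega)
            have hc''pos : 1 ≤ c'' := Nat.pos_of_ne_zero fun h => by simp [h] at hc
            have stpA : Step H (.allToAll i' i) σ₀
                ((σ₀.set i' ⟨ci * n', xsi', si⟩).set i ⟨n' * c'' / n', x' :: (x :: xs), s⟩) :=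
              Step.allToAll i' i hwf0 hij hx'
                (by rw [List.getElem?_eq_some_iff]; exact ⟨hi'lt0, hi'eq0⟩)
                hi0' ⟨c'', rfl⟩
            have hwfρ : H.WFType ((σ₀.set i' ⟨ci * n', xsi', si⟩).set i
                ⟨n' * c'' / n', x' :: (x :: xs), s⟩) :=
              toAll_wf hwf0 hij hx'
                (by rw [List.getElem?_eq_some_iff]; exact ⟨hi'lt0, hi'eq0⟩)
                hi0' ⟨c'', rfl⟩
            have hilt2 : i < (((σ₀.set i ⟨n' * c'' * n, xs, s⟩).set i' ⟨ci * n', xsi', si⟩).set i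
                ⟨n' * c'' * n / n', x' :: xs, s⟩).length := by simpa using hilt
            have hσ₂i : (((σ₀.set i ⟨n' * c'' * n, xs, s⟩).set i' ⟨ci * n', xsi', si⟩).set i
                ⟨n' * c'' * n / n', x' :: xs, s⟩)[i]'hilt2 = ⟨n' * c'' * n / n', x' :: xs, s⟩ := by
              rw [List.getElem_set, if_pos rfl]
            obtain ⟨hwf', hstep⟩ := gather_insert (c := c'') hwf2 hilt2 hx hxfresh2
              (by rw [hσ₂i]; exact hdiv) hc''pos
            simp only [hσ₂i] at hwf' hstep
            have hperm : Step H .allPermute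
                ((σ₀.set i' ⟨ci * n', xsi', si⟩).set i ⟨n' * c'' / n', x' :: (x :: xs), s⟩)
                ((((σ₀.set i ⟨n' * c'' * n, xs, s⟩).set i' ⟨ci * n', xsi', si⟩).set i
                  ⟨n' * c'' * n / n', x' :: xs, s⟩).set i ⟨c'', x :: (x' :: xs), s⟩) := by
              refine Step.allPermute hwfρ hwf' ?_ ?_
              · simp only [localtype_set, hdiv, hdiv2]
                rw [List.set_set, List.set_comm _ _ (show i' ≠ i by omega),
                  List.set_comm _ _ (show i' ≠ i by omega), List.set_set]
              · simp only [globaltype_set]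
                have hsetg : (globaltype σ₀).set i s = globaltype σ₀ :=
                  set_self _ _ (fun h => by simp [globaltype, List.getElem_map, hieq])
                rw [List.set_set, hsetg]
            exact ⟨_, i, .cons (.allToAll i' i) stpA (.cons .allPermute hperm (.nil _)), hwf',
              by simp [CSeq.labels], by simp [CSeq.labels, Label.kind],
              by simp [CSeq.labels, Label.kind], hstep⟩
        · -- T1 : disjoint dimensions
          have hi'eq0 : σ₀[i']'hi'lt0 = ⟨ci, x' :: xsi', si⟩ := by
            rw [← hi'eq, List.getElem_set, if_neg (by omega)]
          have hj'eq0 : σ₀[j']'hj'lt0 = ⟨cj, xsj', sj⟩ := by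
            rw [← hj'eq, List.getElem_set, if_neg (by omega)]
          have stpA : Step H (.allToAll i' j') σ₀
              ((σ₀.set i' ⟨ci * n', xsi', si⟩).set j' ⟨cj / n', x' :: xsj', sj⟩) :=
            Step.allToAll i' j' hwf0 hij hx'
              (by rw [List.getElem?_eq_some_iff]; exact ⟨hi'lt0, hi'eq0⟩)
              (by rw [List.getElem?_eq_some_iff]; exact ⟨hj'lt0, hj'eq0⟩) hdvd
          have hwfρ : H.WFType ((σ₀.set i' ⟨ci * n', xsi', si⟩).set j' ⟨cj / n', x' :: xsj', sj⟩) :=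
            toAll_wf hwf0 hij hx'
              (by rw [List.getElem?_eq_some_iff]; exact ⟨hi'lt0, hi'eq0⟩)
              (by rw [List.getElem?_eq_some_iff]; exact ⟨hj'lt0, hj'eq0⟩) hdvd
          have hilt2 : i < (((σ₀.set i ⟨c*n, xs, s⟩).set i' ⟨ci * n', xsi', si⟩).set j'
              ⟨cj / n', x' :: xsj', sj⟩).length := by simpa using hilt
          have hσ₂i : (((σ₀.set i ⟨c*n, xs, s⟩).set i' ⟨ci * n', xsi', si⟩).set j'
              ⟨cj / n', x' :: xsj', sj⟩)[i]'hilt2 = ⟨c * n, xs, s⟩ := by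
            rw [List.getElem_set, if_neg (by omega), List.getElem_set, if_neg (by omega),
              List.getElem_set, if_pos rfl]
          obtain ⟨hwf', hstep⟩ := gather_insert (c := c) hwf2 hilt2 hx hxfresh2 (by rw [hσ₂i]) hc
          simp only [hσ₂i] at hwf' hstep
          have hperm : Step H .allPermute
              ((σ₀.set i' ⟨ci * n', xsi', si⟩).set j' ⟨cj / n', x' :: xsj', sj⟩)
              ((((σ₀.set i ⟨c*n, xs, s⟩).set i' ⟨ci * n', xsi', si⟩).set j'
                ⟨cj / n', x' :: xsj', sj⟩).set i ⟨c, x :: xs, s⟩) := by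
            refine Step.allPermute hwfρ hwf' ?_ ?_
            · have hsetl : (localtype σ₀).set i c = localtype σ₀ :=
                set_self _ _ (fun h => by simp [localtype, List.getElem_map, hieq])
              simp only [localtype_set]
              rw [List.set_comm _ _ (show j' ≠ i by omega),
                List.set_comm _ _ (show i' ≠ i by omega), List.set_set, hsetl]
            · have hsetg : (globaltype σ₀).set i s = globaltype σ₀ :=
                set_self _ _ (fun h => by simp [globaltype, List.getElem_map, hieq])
              simp only [globaltype_set]
              rw [List.set_comm _ _ (show j' ≠ i by omega),
                List.set_comm _ _ (show i' ≠ i by omega), List.set_set, hsetg]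
          refine ⟨_, i, .cons (.allToAll i' j') stpA (.cons .allPermute hperm (.nil _)),
            hwf', ?_, ?_, ?_, hstep⟩ <;> simp [CSeq.labels, Label.kind]
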